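/- Let f, g : X → ℝ be continuous functions on a topological space X with ‖f − g‖_∞ ≤ K < ∞. Then for all h ∈ ℝ the sublevel sets satisfy {f ≤ h − K} ⊆ {g ≤ h} ⊆ {f ≤ h + K}; consequently the two projective systems of groups π₁(X/{f ≤ h}) and π₁(X/{g ≤ h}) are intertwined by maps making the interleaving diagrams commute, and their projective limits over h → −∞ are isomorphic. -/

import Mathlib

open CategoryTheory
open scoped FundamentalGroupoid

variable {X : Type} [TopologicalSpace X] (f : X → ℝ)

/-- The predicate on `Unit ⊕ X` selecting the added basepoint together with the
sublevel set `X_h = {f ≤ h}`. -/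
def inBase (h : ℝ) : Unit ⊕ X → Prop :=
  Sum.elim (fun _ => True) (fun x => f x ≤ h)

/-- The setoid on `Unit ⊕ X` collapsing the sublevel set `X_h = {f ≤ h}` (together
with an added basepoint) to a single point. -/
def collapseSetoid (h : ℝ) : Setoid (Unit ⊕ X) where
  r a b := a = b ∨ (inBase f h a ∧ inBase f h b)
  iseqv := by
    refine ⟨fun a => Or.inl rfl, ?_, ?_⟩
    · rintro a b (rfl | ⟨ha, hb⟩)
      exacts [Or.inl rfl, Or.inr ⟨hb, ha⟩]
    · rintro a b c (rfl | ⟨ha, hb⟩) h2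
      · exact h2
      · rcases h2 with rfl | ⟨_, hc⟩
        exacts [Or.inr ⟨ha, hb⟩, Or.inr ⟨ha, hc⟩]

/-- The quotient `X/X_h` collapsing the sublevel set `{f ≤ h}` to a point. -/
abbrev Zip (h : ℝ) := Quotient (collapseSetoid f h)

/-- The basepoint `⋆_h` of `X/X_h`, the class of the collapsed sublevel set. -/
def zipBase (h : ℝ) : Zip f h := Quotient.mk _ (Sum.inl ())

/-- The map `X/X_h → X/X_{h'}` induced by the inclusion of sublevel sets, for `h ≤ h'`. -/
def zipMap {h h' : ℝ} (hle : h ≤ h') : C(Zip f h, Zip f h') :=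
  ⟨Quotient.map' id (by
      rintro a b (rfl | ⟨ha, hb⟩)
      · exact Or.inl rfl
      · refine Or.inr ⟨?_, ?_⟩ <;>
        · first
          | (cases a with
              | inl u => trivial
              | inr x => exact le_trans (by exact ha) hle)
          | (cases b with
              | inl u => trivial
              | inr x => exact le_trans (by exact hb) hle)),
    Continuous.quotient_map' continuous_id _⟩

/-- The homomorphism `π₁(X/X_h, ⋆_h) → π₁(X/X_{h'}, ⋆_{h'})` induced by `zipMap`. -/
noncomputable def zipInd {h h' : ℝ} (hle : h ≤ h') :
    FundamentalGroup (Zip f h) (zipBase f h) →*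
      FundamentalGroup (Zip f h') (zipBase f h') :=
  CategoryTheory.Functor.mapEnd
    (X := (⟨zipBase f h⟩ : FundamentalGroupoid (TopCat.of (Zip f h))))
    (πₘ (show TopCat.of (Zip f h) ⟶ TopCat.of (Zip f h') from TopCat.ofHom (zipMap f hle)))

/-- The projective limit (as `h → -∞`) of the fundamental groups
`π₁(X/X_h, ⋆_h)`, realized as compatible families. -/
noncomputable def limZipPi1 : Subgroup (∀ h : ℝ, FundamentalGroup (Zip f h) (zipBase f h)) where
  carrier := {x | ∀ ⦃h h' : ℝ⦄ (hle : h ≤ h'), zipInd f hle (x h) = x h'}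
  one_mem' := by intro h h' hle; exact map_one _
  mul_mem' := by intro a b ha hb h h' hle; rw [Pi.mul_apply, Pi.mul_apply, map_mul, ha hle, hb hle]
  inv_mem' := by intro a ha h h' hle; simp [Pi.inv_apply, ha hle]

private lemma inBase_mono {f g : X → ℝ} {h h' : ℝ}
    (H : ∀ x, f x ≤ h → g x ≤ h') {a : Unit ⊕ X} (ha : inBase f h a) : inBase g h' a := by
  cases a with
  | inl u => trivial
  | inr x => exact H x ha

def cMap (g : X → ℝ) {h h' : ℝ} (H : ∀ x, f x ≤ h → g x ≤ h') : C(Zip f h, Zip g h') :=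
  ⟨Quotient.map' id (by
      rintro a b (rfl | ⟨ha, hb⟩)
      · exact Or.inl rfl
      · exact Or.inr ⟨inBase_mono H ha, inBase_mono H hb⟩),
    Continuous.quotient_map' continuous_id _⟩

noncomputable def cInd (g : X → ℝ) {h h' : ℝ} (H : ∀ x, f x ≤ h → g x ≤ h') :
    FundamentalGroup (Zip f h) (zipBase f h) →*
      FundamentalGroup (Zip g h') (zipBase g h') :=
  CategoryTheory.Functor.mapEnd
    (X := (⟨zipBase f h⟩ : FundamentalGroupoid (TopCat.of (Zip f h))))
    (πₘ (show TopCat.of (Zip f h) ⟶ TopCat.of (Zip g h') from TopCat.ofHom (cMap f g H)))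

lemma zipInd_eq_cInd {h h' : ℝ} (hle : h ≤ h') :
    zipInd f hle = cInd f f (fun z hz => le_trans hz hle) := rfl

lemma cMap_comp (g k : X → ℝ) {h1 h2 h3 : ℝ} (H1 : ∀ z, f z ≤ h1 → g z ≤ h2)
    (H2 : ∀ z, g z ≤ h2 → k z ≤ h3) :
    (cMap g k H2).comp (cMap f g H1) = cMap f k (fun z hz => H2 z (H1 z hz)) := by
  ext q
  induction q using Quotient.ind
  rfl


lemma cInd_comp (g k : X → ℝ) {h1 h2 h3 : ℝ} (H1 : ∀ z, f z ≤ h1 → g z ≤ h2)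
    (H2 : ∀ z, g z ≤ h2 → k z ≤ h3) (a : FundamentalGroup (Zip f h1) (zipBase f h1)) :
    cInd g k H2 (cInd f g H1 a) = cInd f k (fun z hz => H2 z (H1 z hz)) a := by
  set c1 : TopCat.of (Zip f h1) ⟶ TopCat.of (Zip g h2) := TopCat.ofHom (cMap f g H1) with hc1
  set c2 : TopCat.of (Zip g h2) ⟶ TopCat.of (Zip k h3) := TopCat.ofHom (cMap g k H2) with hc2
  set c12 : TopCat.of (Zip f h1) ⟶ TopCat.of (Zip k h3) :=
    TopCat.ofHom (cMap f k (fun z hz => H2 z (H1 z hz))) with hc12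
  have hfun : ∀ q : Zip f h1, c2 (c1 q) = c12 q := by
    intro q
    induction q using Quotient.ind
    rfl
  change (πₘ c2).map ((πₘ c1).map a) = (πₘ c12).map a
  induction a using Quotient.inductionOn with
  | h γ =>
    show Path.Homotopic.Quotient.map (Path.Homotopic.Quotient.map (Path.Homotopic.Quotient.mk γ) c1.hom) c2.hom =
      Path.Homotopic.Quotient.map (Path.Homotopic.Quotient.mk γ) c12.hom
    rw [← Path.Homotopic.Quotient.mk_map, ← Path.Homotopic.Quotient.mk_map, ← Path.Homotopic.Quotient.mk_map]
    congr 1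
    rw [Path.map_map]
    ext t
    exact hfun (γ t)

lemma cInd_id {h : ℝ} (H : ∀ z, f z ≤ h → f z ≤ h)
    (a : FundamentalGroup (Zip f h) (zipBase f h)) : cInd f f H a = a := by
  set c : TopCat.of (Zip f h) ⟶ TopCat.of (Zip f h) := TopCat.ofHom (cMap f f H) with hc
  have hfun : ∀ q : Zip f h, c q = q := by
    intro q
    induction q using Quotient.ind
    rfl
  change (πₘ c).map a = a
  induction a using Quotient.inductionOn with
  | h γ =>
    show Path.Homotopic.Quotient.map (Path.Homotopic.Quotient.mk γ) c.hom = Path.Homotopic.Quotient.mk γ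
    rw [← Path.Homotopic.Quotient.mk_map]
    congr 1
    ext t
    exact hfun (γ t)

lemma cInd_congr (g : X → ℝ) {h' : ℝ} (x : limZipPi1 f) {a b : ℝ} (hab : a ≤ b)
    (H1 : ∀ z, f z ≤ a → g z ≤ h') (H2 : ∀ z, f z ≤ b → g z ≤ h') :
    cInd f g H2 ((x : ∀ h, FundamentalGroup (Zip f h) (zipBase f h)) b)
      = cInd f g H1 ((x : ∀ h, FundamentalGroup (Zip f h) (zipBase f h)) a) := by
  rw [← x.2 hab, zipInd_eq_cInd, cInd_comp]

lemma cInd_self (x : limZipPi1 f) {a h : ℝ} (H : ∀ z, f z ≤ a → f z ≤ h) :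
    cInd f f H ((x : ∀ h, FundamentalGroup (Zip f h) (zipBase f h)) a)
      = (x : ∀ h, FundamentalGroup (Zip f h) (zipBase f h)) h := by
  have e1 := cInd_congr f f x (min_le_left a h)
    (fun z hz => le_trans hz (min_le_right a h)) H
  rw [e1, ← zipInd_eq_cInd]
  exact x.2 (min_le_right a h)

/-- Let `f, g : X → ℝ` be continuous with `‖f − g‖_∞ ≤ K`. Then for all `h` the
sublevel sets satisfy `{f ≤ h − K} ⊆ {g ≤ h} ⊆ {f ≤ h + K}`; consequently the two
projective systems of fundamental groups of the collapsed quotients are intertwined,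
and their projective limits as `h → -∞` are isomorphic. -/
theorem sublevel_interleaving_and_lim_iso (g : X → ℝ) (hf : Continuous f)
    (hg : Continuous g) (K : ℝ) (hK : ∀ x, |f x - g x| ≤ K) :
    (∀ h : ℝ, {x | f x ≤ h - K} ⊆ {x | g x ≤ h} ∧ {x | g x ≤ h} ⊆ {x | f x ≤ h + K}) ∧
    Nonempty (limZipPi1 f ≃* limZipPi1 g) := by
  have Hfg : ∀ h : ℝ, ∀ z, f z ≤ h - K → g z ≤ h := by
    intro h z hz
    have := abs_le.mp (hK z)
    linarith [this.1, this.2]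
  have Hgf : ∀ h : ℝ, ∀ z, g z ≤ h - K → f z ≤ h := by
    intro h z hz
    have := abs_le.mp (hK z)
    linarith [this.1, this.2]
  constructor
  · intro h
    refine ⟨fun z hz => Hfg h z hz, fun z hz => ?_⟩
    have := abs_le.mp (hK z)
    simp only [Set.mem_setOf_eq] at hz ⊢
    linarith [this.1, this.2]
  · have memf : ∀ x : limZipPi1 f,
        (fun h : ℝ => cInd f g (Hfg h) (x.1 (h - K))) ∈ limZipPi1 g := by
      intro x h h' hle
      rw [zipInd_eq_cInd, cInd_comp]
      exact (cInd_congr f g x (by linarith : h - K ≤ h' - K) _ (Hfg h')).symm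
    have memg : ∀ y : limZipPi1 g,
        (fun h : ℝ => cInd g f (Hgf h) (y.1 (h - K))) ∈ limZipPi1 f := by
      intro y h h' hle
      rw [zipInd_eq_cInd, cInd_comp]
      exact (cInd_congr g f y (by linarith : h - K ≤ h' - K) _ (Hgf h')).symm
    refine ⟨⟨⟨fun x => ⟨_, memf x⟩, fun y => ⟨_, memg y⟩, ?_, ?_⟩, ?_⟩⟩
    · intro x
      apply Subtype.ext
      funext h
      show cInd g f (Hgf h) (cInd f g (Hfg (h - K)) (x.1 (h - K - K)))
        = x.1 h
      rw [cInd_comp]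
      exact cInd_self f x _
    · intro y
      apply Subtype.ext
      funext h
      show cInd f g (Hfg h) (cInd g f (Hgf (h - K)) (y.1 (h - K - K)))
        = y.1 h
      rw [cInd_comp]
      exact cInd_self g y _
    · intro x y
      apply Subtype.ext
      funext h
      simp only [Subgroup.coe_mul, Pi.mul_apply, map_mul]
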